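/- Let n ≥ 2 and let u : ℝⁿ → ℝ be convex and 1-Lipschitz, and suppose there is a constant C₀ with |u(x) - V₊(x)| ≤ C₀ for all x ∈ ℝⁿ. Then for every x̄ ∈ ℝ^{n-1} the limit ũ(x̄) := lim_{x₁ → -∞} u(x₁, x̄) exists, and for every R > 0 the convergence u(x₁, x̄) → ũ(x̄) as x₁ → -∞ is uniform on { x̄ ∈ ℝ^{n-1} : |x̄| ≤ R }. -/

import Mathlib

open Filter Real

/-- `V₊(x) = sup { x·λ : λ ∈ 𝕊^{n-1}, λ₁ ≥ 0 }`; explicitly `|x|` if `x₁ ≥ 0`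
and `|x̄|` if `x₁ < 0`. -/
noncomputable def Vplus (n : ℕ) [NeZero n] (x : EuclideanSpace ℝ (Fin n)) : ℝ :=
  if 0 ≤ x 0 then ‖x‖ else Real.sqrt (∑ i ∈ Finset.univ.erase (0 : Fin n), x i ^ 2)

/-- The point `(x₁, x̄) ∈ ℝ^{m+1}` built from `x₁ = t ∈ ℝ` and `x̄ ∈ ℝᵐ`. -/
noncomputable def embed (m : ℕ) (t : ℝ) (xb : EuclideanSpace ℝ (Fin m)) :
    EuclideanSpace ℝ (Fin (m + 1)) :=
  (WithLp.equiv 2 (Fin (m + 1) → ℝ)).symm (Fin.cases t fun j => xb j)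

lemma embed_zero (m : ℕ) (t : ℝ) (xb : EuclideanSpace ℝ (Fin m)) : embed m t xb 0 = t := rfl

lemma embed_succ (m : ℕ) (t : ℝ) (xb : EuclideanSpace ℝ (Fin m)) (j : Fin m) :
    embed m t xb j.succ = xb j := by
  show Fin.cases t (fun j => xb j) j.succ = xb j
  simp

lemma embed_add (m : ℕ) (t s : ℝ) (xb yb : EuclideanSpace ℝ (Fin m)) :
    embed m t xb + embed m s yb = embed m (t + s) (xb + yb) := by
  ext i
  induction i using Fin.cases with
  | zero => simp [PiLp.add_apply, embed_zero]
  | succ j => simp [PiLp.add_apply, embed_succ]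

lemma embed_smul (m : ℕ) (c t : ℝ) (xb : EuclideanSpace ℝ (Fin m)) :
    c • embed m t xb = embed m (c * t) (c • xb) := by
  ext i
  induction i using Fin.cases with
  | zero => simp [PiLp.smul_apply, embed_zero]
  | succ j => simp [PiLp.smul_apply, embed_succ]

lemma norm_embed_zero (m : ℕ) (xb : EuclideanSpace ℝ (Fin m)) : ‖embed m 0 xb‖ = ‖xb‖ := by
  rw [EuclideanSpace.norm_eq, EuclideanSpace.norm_eq, Fin.sum_univ_succ]
  simp [embed_zero, embed_succ]

lemma Vplus_embed (m : ℕ) (t : ℝ) (ht : t ≤ 0) (xb : EuclideanSpace ℝ (Fin m)) :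
    Vplus (m + 1) (embed m t xb) = ‖xb‖ := by
  have hsum : ∑ i ∈ Finset.univ.erase (0 : Fin (m+1)), (embed m t xb i) ^ 2
      = ∑ j : Fin m, (xb j) ^ 2 := by
    have h := Finset.sum_erase_add Finset.univ (fun i => (embed m t xb i) ^ 2)
      (Finset.mem_univ (0 : Fin (m+1)))
    have h2 : ∑ i : Fin (m+1), (embed m t xb i) ^ 2
        = (embed m t xb 0) ^ 2 + ∑ j : Fin m, (xb j) ^ 2 := by
      rw [Fin.sum_univ_succ]; simp [embed_succ]
    simp only at h
    rw [h2] at h; linarith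
  unfold Vplus
  split_ifs with h
  · have ht0 : t = 0 := le_antisymm ht (by simpa [embed_zero] using h)
    subst ht0
    exact norm_embed_zero m xb
  · rw [hsum, EuclideanSpace.norm_eq]
    congr 1
    exact Finset.sum_congr rfl fun j _ => by rw [Real.norm_eq_abs, sq_abs]


/-- For a convex `1`-Lipschitz function `u` at bounded distance from `V₊`, the limit
`ũ(x̄) = lim_{x₁ → -∞} u(x₁, x̄)` exists, and the convergence is uniform on every
ball `{|x̄| ≤ R}`. -/
theorem cmc_slab_limit_exists (m : ℕ) (hm : 1 ≤ m)
    (u : EuclideanSpace ℝ (Fin (m + 1)) → ℝ)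
    (hconv : ConvexOn ℝ Set.univ u)
    (hlip : LipschitzWith 1 u)
    (C₀ : ℝ) (hC₀ : 0 < C₀)
    (hbd : ∀ x : EuclideanSpace ℝ (Fin (m + 1)), |u x - Vplus (m + 1) x| ≤ C₀) :
    ∃ ut : EuclideanSpace ℝ (Fin m) → ℝ,
      (∀ xb : EuclideanSpace ℝ (Fin m),
        Tendsto (fun t : ℝ => u (embed m t xb)) atBot (nhds (ut xb))) ∧
      ∀ R > (0 : ℝ),
        TendstoUniformlyOn (fun (t : ℝ) (xb : EuclideanSpace ℝ (Fin m)) => u (embed m t xb))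
          ut atBot {xb : EuclideanSpace ℝ (Fin m) | ‖xb‖ ≤ R} := by
  set φ : EuclideanSpace ℝ (Fin m) → ℝ → ℝ := fun xb t => u (embed m t xb) with hφ
  -- convexity in t
  have hφconv : ∀ xb, ConvexOn ℝ Set.univ (φ xb) := by
    intro xb
    refine ⟨convex_univ, fun t _ s _ a b ha hb hab => ?_⟩
    have key := hconv.2 (Set.mem_univ (embed m t xb)) (Set.mem_univ (embed m s xb)) ha hb hab
    have : a • embed m t xb + b • embed m s xb = embed m (a * t + b * s) xb := by
      rw [embed_smul, embed_smul, embed_add]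
      congr 1
      rw [← add_smul, hab, one_smul]
    rwa [this] at key
  -- bounds for t ≤ 0
  have hub : ∀ xb, ∀ t ≤ (0:ℝ), φ xb t ≤ ‖xb‖ + C₀ := by
    intro xb t ht
    have := hbd (embed m t xb)
    rw [Vplus_embed m t ht xb] at this
    have := abs_le.1 this
    simp only [hφ]; linarith [this.2]
  have hlb : ∀ xb, ∀ t ≤ (0:ℝ), ‖xb‖ - C₀ ≤ φ xb t := by
    intro xb t ht
    have := hbd (embed m t xb)
    rw [Vplus_embed m t ht xb] at this
    have := abs_le.1 this
    simp only [hφ]; linarith [this.1]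
  -- monotonicity
  have hmono : ∀ xb, Monotone (φ xb) := by
    intro xb
    intro a b hab
    rcases eq_or_lt_of_le hab with rfl | hlt
    · exact le_rfl
    by_contra hcon
    push_neg at hcon
    set s : ℝ := (φ xb b - φ xb a) / (b - a) with hs
    have hsneg : s < 0 := div_neg_of_neg_of_pos (by linarith) (by linarith)
    set M : ℝ := ‖xb‖ + C₀ + 1 + |φ xb a| with hM
    have hMpos : 0 < M := by positivity
    set t : ℝ := min a 0 - M / (-s) with htdef
    clear_value s M t
    have hdivpos : 0 < M / (-s) := div_pos hMpos (by linarith)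
    have hta : t < a := by
      have : min a 0 ≤ a := min_le_left _ _
      linarith
    have ht0 : t ≤ 0 := by
      have : min a 0 ≤ 0 := min_le_right _ _
      linarith
    have hslope := (hφconv xb).slope_mono_adjacent (Set.mem_univ t) (Set.mem_univ b) hta hlt
    -- (φ a - φ t)/(a - t) ≤ s
    rw [div_le_div_iff₀ (by linarith) (by linarith)] at hslope
    -- hslope : (φ xb a - φ xb t) * (b - a) ≤ (φ xb b - φ xb a) * (a - t)
    have hst : s * (a - t) ≤ - M := by
      have h1 : -s * (a - t) ≥ -s * (M / (-s)) := by
        apply mul_le_mul_of_nonneg_left _ (by linarith : (0:ℝ) ≤ -s)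
        have : min a 0 ≤ a := min_le_left _ _
        simp only [htdef]; linarith
      have h2 : -s * (M / (-s)) = M := by
        rw [mul_comm]
        exact div_mul_cancel₀ M (ne_of_gt (by linarith : (0:ℝ) < -s))
      nlinarith
    have hba : (0:ℝ) < b - a := by linarith
    have hfe : φ xb b - φ xb a = s * (b - a) := by
      rw [hs, div_mul_cancel₀ _ (ne_of_gt hba)]
    rw [hfe] at hslope
    have key : s * (a - t) * (b - a) ≤ -M * (b - a) :=
      mul_le_mul_of_nonneg_right hst hba.le
    have hphit : φ xb a - φ xb t ≤ -M := by nlinarith [key, hslope, hba]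
    have hup := hub xb t ht0
    have : φ xb t ≥ φ xb a + M := by linarith
    have habs : φ xb a + |φ xb a| ≥ 0 := by
      cases abs_cases (φ xb a) with
      | inl h => linarith [h.1]
      | inr h => linarith [h.1]
    simp only [hM] at this
    linarith
  -- bounded below
  have hbdd : ∀ xb, BddBelow (Set.range (φ xb)) := by
    intro xb
    refine ⟨‖xb‖ - C₀, ?_⟩
    rintro y ⟨t, rfl⟩
    rcases le_or_gt t 0 with ht | ht
    · exact hlb xb t ht
    · exact le_trans (hlb xb 0 le_rfl) (hmono xb ht.le)
  set ut : EuclideanSpace ℝ (Fin m) → ℝ := fun xb => ⨅ t, φ xb t with hut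
  have htend : ∀ xb, Tendsto (φ xb) atBot (nhds (ut xb)) := fun xb =>
    tendsto_atBot_ciInf (hmono xb) (hbdd xb)
  -- Lipschitz in xb, uniformly in t
  have hliph : ∀ (t : ℝ) (xb yb : EuclideanSpace ℝ (Fin m)),
      dist (φ xb t) (φ yb t) ≤ dist xb yb := by
    intro t xb yb
    have h := hlip.dist_le_mul (embed m t xb) (embed m t yb)
    rw [NNReal.coe_one, one_mul] at h
    refine h.trans (le_of_eq ?_)
    rw [dist_eq_norm, dist_eq_norm]
    have : embed m t xb - embed m t yb = embed m 0 (xb - yb) := by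
      rw [sub_eq_iff_eq_add, embed_add, zero_add, sub_add_cancel]
    rw [this, norm_embed_zero]
  have hut_le : ∀ xb t, ut xb ≤ φ xb t := fun xb t => ciInf_le (hbdd xb) t
  have hliput : ∀ (xb yb : EuclideanSpace ℝ (Fin m)),
      dist (ut xb) (ut yb) ≤ dist xb yb := by
    have key : ∀ (xb yb : EuclideanSpace ℝ (Fin m)), ut xb ≤ ut yb + dist xb yb := by
      intro xb yb
      show (⨅ t, φ xb t) ≤ (⨅ t, φ yb t) + dist xb yb
      have key2 : (⨅ t, φ xb t) - dist xb yb ≤ ⨅ t, φ yb t := by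
        refine le_ciInf fun t => ?_
        have h1 : ut xb ≤ φ xb t := hut_le xb t
        have h2 : dist (φ xb t) (φ yb t) ≤ dist xb yb := hliph t xb yb
        rw [Real.dist_eq, abs_sub_le_iff] at h2
        have h1' : (⨅ t, φ xb t) ≤ φ xb t := h1
        linarith [h2.1]
      linarith [key2]
    intro xb yb
    rw [Real.dist_eq, abs_sub_le_iff]
    constructor
    · have := key xb yb; linarith
    · have := key yb xb; rw [dist_comm] at this; linarith
  refine ⟨ut, htend, fun R hR => ?_⟩
  rw [Metric.tendstoUniformlyOn_iff]
  intro ε hε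
  have hε4 : 0 < ε / 4 := by linarith
  have hBcomp : IsCompact {xb : EuclideanSpace ℝ (Fin m) | ‖xb‖ ≤ R} := by
    have : {xb : EuclideanSpace ℝ (Fin m) | ‖xb‖ ≤ R} = Metric.closedBall 0 R := by
      ext xb; simp [Metric.mem_closedBall, dist_zero_right]
    rw [this]
    exact isCompact_closedBall 0 R
  obtain ⟨net, hnet_sub, hnet_cov⟩ := hBcomp.elim_nhds_subcover
    (fun y => Metric.ball y (ε / 4)) (fun y _ => Metric.ball_mem_nhds y hε4)
  have hev : ∀ᶠ t in atBot, ∀ y ∈ net, dist (φ y t) (ut y) < ε / 4 :=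
    (Filter.eventually_all_finset net).2 fun y _ =>
      (Metric.tendsto_nhds.1 (htend y)) (ε / 4) hε4
  filter_upwards [hev] with t ht xb hxb
  obtain ⟨y, hy_mem, hxy⟩ : ∃ y ∈ net, xb ∈ Metric.ball y (ε / 4) := by
    have := hnet_cov hxb
    simpa using this
  have h1 : dist (ut xb) (ut y) ≤ dist xb y := hliput xb y
  have h2 : dist (ut y) (φ y t) < ε / 4 := by rw [dist_comm]; exact ht y hy_mem
  have h3 : dist (φ y t) (φ xb t) ≤ dist y xb := hliph t y xb
  have hd : dist xb y < ε / 4 := hxy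
  have := dist_triangle4 (ut xb) (ut y) (φ y t) (φ xb t)
  have : dist (ut xb) (φ xb t) < ε := by
    rw [dist_comm y xb] at h3
    calc dist (ut xb) (φ xb t) ≤ dist (ut xb) (ut y) + dist (ut y) (φ y t) + dist (φ y t) (φ xb t) :=
          dist_triangle4 _ _ _ _
      _ < ε / 4 + ε / 4 + ε / 4 := by
          exact add_lt_add_of_lt_of_lt (add_lt_add_of_le_of_lt (h1.trans hd.le) h2)
            (lt_of_le_of_lt h3 (by rwa [dist_comm] at hd))
      _ < ε := by linarith
  exact this
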